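/- Let V and W be finite-dimensional real vector spaces, let v₁, …, vₙ be a basis of V, let C₁ = {Σᵢ tᵢ • vᵢ : tᵢ ≥ 0} be the simplicial cone generated by this basis, and let C₂ ⊆ W be a closed convex cone. Then every ψ ∈ C₁ ⊗max C₂ can be written as ψ = Σᵢ vᵢ ⊗ wᵢ with wᵢ ∈ C₂; in particular the maximal tensor cone C₁ ⊗max C₂ equals the minimal tensor cone C₁ ⊗min C₂ (this is the statement that the minimal and maximal tensor products of a simplex with any state space coincide). -/

import Mathlib

open scoped BigOperators TensorProduct

noncomputable section

/-- The product functional `f ⊗ g` on `V ⊗[ℝ] W`, given by the canonical pairing. -/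
def tensorDual {V W : Type*} [AddCommGroup V] [Module ℝ V] [AddCommGroup W] [Module ℝ W]
    (f : Module.Dual ℝ V) (g : Module.Dual ℝ W) : Module.Dual ℝ (V ⊗[ℝ] W) :=
  (TensorProduct.lid ℝ ℝ).toLinearMap.comp (TensorProduct.map f g)

/-- The minimal tensor cone: finite sums of elementary tensors of cone elements. -/
def minTensor {V W : Type*} [AddCommGroup V] [Module ℝ V] [AddCommGroup W] [Module ℝ W]
    (C : Set V) (D : Set W) : Set (V ⊗[ℝ] W) :=
  {ψ | ∃ (n : ℕ) (x : Fin n → V) (y : Fin n → W),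
    (∀ i, x i ∈ C) ∧ (∀ i, y i ∈ D) ∧ ψ = ∑ i, x i ⊗ₜ[ℝ] y i}

/-- The maximal tensor cone: elements pairing nonnegatively with all products of
functionals nonnegative on the respective cones. -/
def maxTensor {V W : Type*} [AddCommGroup V] [Module ℝ V] [AddCommGroup W] [Module ℝ W]
    (C : Set V) (D : Set W) : Set (V ⊗[ℝ] W) :=
  {ψ | ∀ f : Module.Dual ℝ V, ∀ g : Module.Dual ℝ W,
    (∀ x ∈ C, 0 ≤ f x) → (∀ y ∈ D, 0 ≤ g y) → 0 ≤ tensorDual f g ψ}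

/-- Membership in a proper cone can be tested by linear functionals. -/
lemma properCone_mem_of_dual {W : Type*} [NormedAddCommGroup W] [NormedSpace ℝ W]
    (C : ProperCone ℝ W) (w : W)
    (h : ∀ g : Module.Dual ℝ W, (∀ y ∈ C, 0 ≤ g y) → 0 ≤ g w) : w ∈ C := by
  by_contra hw
  obtain ⟨f, u, hfa, hfw⟩ := geometric_hahn_banach_closed_point
    ((C : PointedCone ℝ W) : ConvexCone ℝ W).convex C.isClosed hw
  have h0 : (0:W) ∈ C := C.toSubmodule.zero_mem
  have hu : 0 < u := by simpa using hfa 0 h0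
  have hneg : ∀ y ∈ C, f y ≤ 0 := by
    intro y hy
    by_contra hfy
    push_neg at hfy
    have ht : (0:ℝ) ≤ u / f y := le_of_lt (div_pos hu hfy)
    have hmem : (u / f y) • y ∈ C := C.toSubmodule.smul_mem ⟨_, ht⟩ hy
    have := hfa _ hmem
    rw [map_smul, smul_eq_mul, div_mul_cancel₀ _ (ne_of_gt hfy)] at this
    exact lt_irrefl u this
  have := h (-(f : W →ₗ[ℝ] ℝ)) (fun y hy => by simpa using hneg y hy)
  simp only [LinearMap.neg_apply, ContinuousLinearMap.coe_coe, neg_nonneg] at this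
  linarith

/-- The `i`-th coordinate map `V ⊗ W → W` with respect to a basis of `V`. -/
def wmap {n : ℕ} {V W : Type*} [AddCommGroup V] [Module ℝ V]
    [AddCommGroup W] [Module ℝ W] (b : Module.Basis (Fin n) ℝ V) (i : Fin n) :
    V ⊗[ℝ] W →ₗ[ℝ] W :=
  (TensorProduct.lid ℝ W).toLinearMap.comp (TensorProduct.map (b.coord i) LinearMap.id)

lemma decomp {n : ℕ} {V W : Type*} [AddCommGroup V] [Module ℝ V]
    [AddCommGroup W] [Module ℝ W] (b : Module.Basis (Fin n) ℝ V) (ψ : V ⊗[ℝ] W) :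
    ψ = ∑ i, b i ⊗ₜ[ℝ] (wmap b i ψ) := by
  have key : (∑ i, (TensorProduct.mk ℝ V W (b i)).comp (wmap b i)) = LinearMap.id := by
    apply TensorProduct.ext'
    intro x y
    simp only [LinearMap.sum_apply, LinearMap.comp_apply, wmap, TensorProduct.map_tmul,
      LinearMap.id_apply, LinearEquiv.coe_coe, TensorProduct.lid_tmul,
      TensorProduct.mk_apply, LinearMap.id_coe, id_eq]
    calc ∑ i, b i ⊗ₜ[ℝ] (b.coord i x • y)
        = ∑ i, (b.coord i x • b i) ⊗ₜ[ℝ] y := by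
          simp_rw [← TensorProduct.smul_tmul]
      _ = (∑ i, b.coord i x • b i) ⊗ₜ[ℝ] y := by rw [TensorProduct.sum_tmul]
      _ = x ⊗ₜ[ℝ] y := by rw [show ∑ i, b.coord i x • b i = x from b.sum_repr x]
  have := congrArg (fun F => F ψ) key
  simpa using this.symm

lemma tensorDual_wmap {n : ℕ} {V W : Type*} [AddCommGroup V] [Module ℝ V]
    [AddCommGroup W] [Module ℝ W] (b : Module.Basis (Fin n) ℝ V) (i : Fin n)
    (g : Module.Dual ℝ W) (ψ : V ⊗[ℝ] W) :
    tensorDual (b.coord i) g ψ = g (wmap b i ψ) := by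
  have : tensorDual (b.coord i) g = g.comp (wmap b i) := by
    apply TensorProduct.ext'
    intro x y
    simp [tensorDual, wmap, TensorProduct.lid_tmul, mul_comm]
  rw [this]; rfl

/-- for the simplicial cone `C₁` generated by a basis of `V` and any closed
convex (proper) cone `C₂` in `W`, every element of the maximal tensor cone is a sum
`Σᵢ vᵢ ⊗ wᵢ` with `wᵢ ∈ C₂`; in particular the maximal and minimal tensor cones coincide. -/
theorem simplex_minTensor_eq_maxTensor {n : ℕ} (hn : 1 ≤ n) {V W : Type*}
    [AddCommGroup V] [Module ℝ V] [FiniteDimensional ℝ V]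
    [NormedAddCommGroup W] [NormedSpace ℝ W] [FiniteDimensional ℝ W]
    (b : Module.Basis (Fin n) ℝ V) (C₁ : Set V)
    (hC₁ : C₁ = {v | ∃ t : Fin n → ℝ, (∀ i, 0 ≤ t i) ∧ v = ∑ i, t i • b i})
    (C₂ : ProperCone ℝ W) :
    (∀ ψ ∈ maxTensor C₁ (C₂ : Set W),
      ∃ w : Fin n → W, (∀ i, w i ∈ C₂) ∧ ψ = ∑ i, b i ⊗ₜ[ℝ] w i) ∧
    maxTensor C₁ (C₂ : Set W) = minTensor C₁ (C₂ : Set W) := by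
  have hcoord : ∀ i : Fin n, ∀ x ∈ C₁, 0 ≤ b.coord i x := by
    intro i x hx
    rw [hC₁] at hx
    obtain ⟨t, ht, rfl⟩ := hx
    have : b.coord i (∑ j, t j • b j) = t i := by
      simp [Module.Basis.coord_apply, map_sum, Finsupp.single_apply]
    rw [this]; exact ht i
  have hbmem : ∀ i : Fin n, b i ∈ C₁ := by
    intro i
    rw [hC₁]
    refine ⟨fun j => if j = i then 1 else 0, fun j => by positivity, ?_⟩
    simp [ite_smul]
  have part1 : ∀ ψ ∈ maxTensor C₁ (C₂ : Set W),
      ∃ w : Fin n → W, (∀ i, w i ∈ C₂) ∧ ψ = ∑ i, b i ⊗ₜ[ℝ] w i := by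
    intro ψ hψ
    refine ⟨fun i => wmap b i ψ, fun i => ?_, decomp b ψ⟩
    apply properCone_mem_of_dual
    intro g hg
    rw [← tensorDual_wmap]
    exact hψ (b.coord i) g (hcoord i) hg
  refine ⟨part1, ?_⟩
  ext ψ
  constructor
  · intro h
    obtain ⟨w, hw, hψ⟩ := part1 ψ h
    exact ⟨n, b, w, hbmem, hw, hψ⟩
  · rintro ⟨m, x, y, hx, hy, rfl⟩
    intro f g hf hg
    rw [map_sum]
    apply Finset.sum_nonneg
    intro i _
    have : tensorDual f g (x i ⊗ₜ[ℝ] y i) = f (x i) * g (y i) := by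
      simp [tensorDual]
    rw [this]
    exact mul_nonneg (hf _ (hx i)) (hg _ (hy i))

end
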